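/- LMI implies dissipation inequality along the nonlinear dynamics: Suppose P ≻ 0, M diagonal positive, L ∈ ℝ^{m×n}, α ∈ (0,1), and the block matrix F = [[−α²P, 0, PC₂ᵀ + Lᵀ, PAᵀ],[0, −I, D₂₁ᵀ, Bᵀ],[C₂P + L, D₂₁, −2M, MB₂ᵀ],[AP, B, B₂M, −P]] is negative semidefinite. Let Q = P⁻¹, H = LP⁻¹, Λ = M⁻¹. Then for any x ∈ ℝ^n with ‖Hx‖_∞ ≤ 1, any input u, with v = C₂x + D₂₁u, w = Δ(v) (elementwise deadzone), and x⁺ = Ax + Bu + B₂w, it holds that x⁺ᵀ Q x⁺ ≤ α² xᵀ Q x + uᵀu. -/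

import Mathlib

open Matrix
noncomputable def dzn (v : ℝ) : ℝ := if |v| ≤ 1 then 0 else if v > 1 then v - 1 else v + 1

lemma dzn_sector (v h : ℝ) (hh : |h| ≤ 1) : 0 ≤ dzn v * (v + h - dzn v) := by
  rw [abs_le] at hh
  unfold dzn
  split_ifs with h1 h2
  · simp
  · nlinarith
  · push_neg at h2
    have hv : v < -1 := by
      by_contra hc
      push_neg at hc
      exact h1 (abs_le.mpr ⟨hc, h2⟩)
    nlinarith

lemma dot_transpose_mulVec {k l : ℕ} (N : Matrix (Fin k) (Fin l) ℝ) (y : Fin l → ℝ) (z : Fin k → ℝ) :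
    y ⬝ᵥ Nᵀ *ᵥ z = (N *ᵥ y) ⬝ᵥ z := by
  rw [dotProduct_mulVec, vecMul_transpose]

theorem lmi_implies_dissipation (n r m : ℕ)
    (A : Matrix (Fin n) (Fin n) ℝ) (B : Matrix (Fin n) (Fin r) ℝ)
    (B₂ : Matrix (Fin n) (Fin m) ℝ) (C₂ : Matrix (Fin m) (Fin n) ℝ)
    (D₂₁ : Matrix (Fin m) (Fin r) ℝ)
    (P : Matrix (Fin n) (Fin n) ℝ) (hP : P.PosDef)
    (d : Fin m → ℝ) (hd : ∀ i, 0 < d i) (M : Matrix (Fin m) (Fin m) ℝ)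
    (hM : M = Matrix.diagonal d)
    (L : Matrix (Fin m) (Fin n) ℝ) (α : ℝ) (hα : 0 < α) (hα1 : α < 1)
    (hF : (-(Matrix.fromBlocks
        (Matrix.fromBlocks (-(α ^ 2) • P) 0 0 (-(1 : Matrix (Fin r) (Fin r) ℝ)))
        (Matrix.fromBlocks (P * C₂ᵀ + Lᵀ) (P * Aᵀ) D₂₁ᵀ Bᵀ)
        (Matrix.fromBlocks (C₂ * P + L) D₂₁ (A * P) B)
        (Matrix.fromBlocks (-(2 : ℝ) • M) (M * B₂ᵀ) (B₂ * M) (-P)))).PosSemidef)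
    (x : Fin n → ℝ) (u : Fin r → ℝ) (hx : ∀ i, |(L * P⁻¹).mulVec x i| ≤ 1) :
    (A.mulVec x + B.mulVec u +
        B₂.mulVec (fun i => dzn ((C₂.mulVec x + D₂₁.mulVec u) i))) ⬝ᵥ
      P⁻¹.mulVec (A.mulVec x + B.mulVec u +
        B₂.mulVec (fun i => dzn ((C₂.mulVec x + D₂₁.mulVec u) i))) ≤
    α ^ 2 * (x ⬝ᵥ P⁻¹.mulVec x) + u ⬝ᵥ u := by
  have hPQ : P * P⁻¹ = 1 := Matrix.mul_nonsing_inv P hP.det_pos.ne'.isUnit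
  have hPt : Pᵀ = P := by simpa using hP.1.eq
  set w : Fin m → ℝ := fun i => dzn ((C₂.mulVec x + D₂₁.mulVec u) i) with hw
  set xp : Fin n → ℝ := A.mulVec x + B.mulVec u + B₂.mulVec w with hxp
  set a : Fin n → ℝ := P⁻¹ *ᵥ x with ha'
  set e : Fin n → ℝ := P⁻¹ *ᵥ xp with he'
  set c : Fin m → ℝ := fun i => (d i)⁻¹ * w i with hc
  have ha : P *ᵥ a = x := by rw [ha', mulVec_mulVec, hPQ, one_mulVec]
  have he : P *ᵥ e = xp := by rw [he', mulVec_mulVec, hPQ, one_mulVec]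
  have hMc : M *ᵥ c = w := by
    funext i
    simp [hM, mulVec_diagonal, hc, mul_comm, mul_assoc, (hd i).ne']
  have hsy : ∀ (y z : Fin n → ℝ), y ⬝ᵥ P *ᵥ z = (P *ᵥ y) ⬝ᵥ z := by
    intro y z
    rw [dotProduct_mulVec, ← mulVec_transpose, hPt]
  have hMsy : ∀ (y z : Fin m → ℝ), y ⬝ᵥ M *ᵥ z = (M *ᵥ y) ⬝ᵥ z := by
    intro y z
    have hMt : Mᵀ = M := by rw [hM, diagonal_transpose]
    rw [dotProduct_mulVec, ← mulVec_transpose, hMt]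
  set ξ : (Fin n ⊕ Fin r) ⊕ (Fin m ⊕ Fin n) → ℝ := (a ⊕ᵥ u) ⊕ᵥ (c ⊕ᵥ e) with hξ
  have h0 := hF.dotProduct_mulVec_nonneg ξ
  simp only [star_trivial, neg_mulVec, dotProduct_neg, neg_nonneg] at h0
  have key : ξ ⬝ᵥ (Matrix.fromBlocks
        (Matrix.fromBlocks (-(α ^ 2) • P) 0 0 (-(1 : Matrix (Fin r) (Fin r) ℝ)))
        (Matrix.fromBlocks (P * C₂ᵀ + Lᵀ) (P * Aᵀ) D₂₁ᵀ Bᵀ)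
        (Matrix.fromBlocks (C₂ * P + L) D₂₁ (A * P) B)
        (Matrix.fromBlocks (-(2 : ℝ) • M) (M * B₂ᵀ) (B₂ * M) (-P))) *ᵥ ξ
      = xp ⬝ᵥ e - α ^ 2 * (x ⬝ᵥ a) - u ⬝ᵥ u
        + 2 * (c ⬝ᵥ (C₂ *ᵥ x + D₂₁ *ᵥ u + L *ᵥ a - w)) := by
    rw [hξ]
    simp only [fromBlocks_mulVec, Sum.elim_comp_inl, Sum.elim_comp_inr,
      sumElim_dotProduct_sumElim, add_mulVec, neg_mulVec, smul_mulVec,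
      one_mulVec, zero_mulVec, ← mulVec_mulVec, dotProduct_add, add_dotProduct,
      dotProduct_neg, neg_dotProduct, dotProduct_smul, smul_dotProduct, smul_eq_mul,
      dotProduct_zero, zero_dotProduct, add_zero, zero_add, dotProduct_sub, sub_dotProduct]
    simp only [hsy, hMsy, ha, he, hMc, dot_transpose_mulVec]
    rw [hxp]
    simp only [dotProduct_add, add_dotProduct, dotProduct_sub, sub_dotProduct]
    rw [dotProduct_comm (C₂ *ᵥ x) c, dotProduct_comm (D₂₁ *ᵥ u) c,
      dotProduct_comm (L *ᵥ a) c, dotProduct_comm (A *ᵥ x) e,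
      dotProduct_comm (B *ᵥ u) e, dotProduct_comm (B₂ *ᵥ w) e,
      dotProduct_comm a x]
    ring
  have hsec : 0 ≤ c ⬝ᵥ (C₂ *ᵥ x + D₂₁ *ᵥ u + L *ᵥ a - w) := by
    rw [dotProduct]
    apply Finset.sum_nonneg
    intro i _
    have h1 : |(L *ᵥ a) i| ≤ 1 := by
      rw [ha', mulVec_mulVec]
      exact hx i
    have h2 := dzn_sector ((C₂ *ᵥ x + D₂₁ *ᵥ u) i) ((L *ᵥ a) i) h1
    have h3 : (0:ℝ) ≤ (d i)⁻¹ := le_of_lt (inv_pos.mpr (hd i))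
    simp only [hc, Pi.add_apply, Pi.sub_apply, hw]
    calc (0:ℝ) ≤ (d i)⁻¹ * (dzn ((C₂ *ᵥ x + D₂₁ *ᵥ u) i) *
        ((C₂ *ᵥ x + D₂₁ *ᵥ u) i + (L *ᵥ a) i - dzn ((C₂ *ᵥ x + D₂₁ *ᵥ u) i))) :=
          mul_nonneg h3 (by simpa [Pi.add_apply] using h2)
      _ = (d i)⁻¹ * dzn ((C₂ *ᵥ x + D₂₁ *ᵥ u) i) *
        ((C₂ *ᵥ x) i + (D₂₁ *ᵥ u) i + (L *ᵥ a) i - dzn ((C₂ *ᵥ x + D₂₁ *ᵥ u) i)) := by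
          simp [Pi.add_apply]; ring
  rw [key] at h0
  linarith
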